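/- For every real α with 0 ≤ α ≤ 1/8 and every natural number K ≥ 1, one has 3^{−α} ≤ (1 − α/K)^K ≤ 2^{−α}. -/

import Mathlib

lemma exp_eighth_aux : Real.exp (-Real.log 3 / 8) ≤ 7 / 8 := by
  apply le_of_pow_le_pow_left₀ (n := 8) (by norm_num) (by norm_num)
  rw [← Real.exp_nat_mul]
  have h8 : (8 : ℕ) * (-Real.log 3 / 8) = -Real.log 3 := by push_cast; ring
  rw [h8, Real.exp_neg, Real.exp_log (by norm_num : (0:ℝ) < 3)]
  norm_num

lemma key_lower_aux (x : ℝ) (hx0 : 0 ≤ x) (hx : x ≤ 1 / 8) :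
    Real.exp (Real.log 3 * (-x)) ≤ 1 - x := by
  have hc : Real.exp ((1 - 8 * x) • (0:ℝ) + (8 * x) • (-Real.log 3 / 8)) ≤
      (1 - 8 * x) • Real.exp 0 + (8 * x) • Real.exp (-Real.log 3 / 8) :=
    convexOn_exp.2 (Set.mem_univ (0 : ℝ)) (Set.mem_univ (-Real.log 3 / 8))
      (by linarith) (by linarith) (by ring)
  simp only [smul_eq_mul, mul_zero, zero_add, Real.exp_zero, mul_one] at hc
  have h8 : 8 * x * (-Real.log 3 / 8) = Real.log 3 * (-x) := by ring
  rw [h8] at hc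
  have h2 : 8 * x * Real.exp (-Real.log 3 / 8) ≤ 8 * x * (7 / 8) :=
    mul_le_mul_of_nonneg_left exp_eighth_aux (by linarith)
  linarith

/-- For every real `α` with `0 ≤ α ≤ 1/8` and every natural `K ≥ 1`,
`3^{−α} ≤ (1 − α/K)^K ≤ 2^{−α}` (real powers for `2` and `3`). -/
theorem pow_one_sub_div_bounds (α : ℝ) (hα0 : 0 ≤ α) (hα : α ≤ 1 / 8)
    (K : ℕ) (hK : 1 ≤ K) :
    (3 : ℝ) ^ (-α) ≤ (1 - α / K) ^ K ∧ (1 - α / K) ^ K ≤ (2 : ℝ) ^ (-α) := by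
  have hK1 : (1 : ℝ) ≤ K := by exact_mod_cast hK
  set x : ℝ := α / K with hxdef
  have hx0 : 0 ≤ x := div_nonneg hα0 (by linarith)
  have hx : x ≤ 1 / 8 := by
    have : x ≤ α := div_le_self hα0 hK1
    linarith
  have hKx : (-x) * K = -α := by
    field_simp [hxdef]
    rw [hxdef, div_mul_cancel₀ α (ne_of_gt (by linarith))]
  constructor
  · have h3 : (3 : ℝ) ^ (-α) = ((3 : ℝ) ^ (-x)) ^ K := by
      rw [← Real.rpow_natCast ((3:ℝ) ^ (-x)) K, ← Real.rpow_mul (by norm_num), hKx]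
    rw [h3]
    apply pow_le_pow_left₀ (Real.rpow_nonneg (by norm_num) _)
    rw [Real.rpow_def_of_pos (by norm_num : (0:ℝ) < 3)]
    exact key_lower_aux x hx0 hx
  · have h2 : (2 : ℝ) ^ (-α) = ((2 : ℝ) ^ (-x)) ^ K := by
      rw [← Real.rpow_natCast ((2:ℝ) ^ (-x)) K, ← Real.rpow_mul (by norm_num), hKx]
    rw [h2]
    apply pow_le_pow_left₀ (by linarith : (0:ℝ) ≤ 1 - x)
    rw [Real.rpow_def_of_pos (by norm_num : (0:ℝ) < 2)]
    have he := Real.add_one_le_exp (Real.log 2 * (-x))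
    have hlog2 : Real.log 2 ≤ 1 := by
      have := Real.log_le_sub_one_of_pos (by norm_num : (0:ℝ) < 2)
      linarith
    nlinarith [Real.log_nonneg (by norm_num : (1:ℝ) ≤ 2)]
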